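/- arXiv:1606.08995 — 2 statements merged into one kernel-verified Lean document; each statement's English description precedes it below -/
import Mathlib

section
/- Let M be a gcd-monoid. Say a quadruple (a₁,a₂,a₃,a₄) of elements of M admits a central cross if there exist x₁,x₂,x₃,x₄ in M with a₁ = x₁x₂, a₂ = x₃x₂, a₃ = x₃x₄, a₄ = x₁x₄. Then (a₁,a₂,a₃,a₄) admits a central cross if and only if there exist x, y in M with a₁ = x·(a₁ ∧̃ a₂), a₂ = y·(a₁ ∧̃ a₂), a₃ = y·(a₃ ∧̃ a₄), a₄ = x·(a₃ ∧̃ a₄), where ∧̃ denotes the right gcd. -/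
universe u

/-- `a` left-divides `b`. -/
def LeftDvd {M : Type*} [Monoid M] (a b : M) : Prop := ∃ x, a * x = b

/-- `a` right-divides `b`. -/
def RightDivides {M : Type*} [Monoid M] (a b : M) : Prop := ∃ x, x * a = b

/-- `m` is a right lcm of `a` and `b` (least upper bound for left divisibility). -/
def IsRightLcm {M : Type*} [Monoid M] (a b m : M) : Prop :=
  LeftDvd a m ∧ LeftDvd b m ∧ ∀ c, LeftDvd a c → LeftDvd b c → LeftDvd m c

/-- `m` is a left lcm of `a` and `b` (least upper bound for right divisibility). -/
def IsLeftLcm {M : Type*} [Monoid M] (a b m : M) : Prop :=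
  RightDivides a m ∧ RightDivides b m ∧ ∀ c, RightDivides a c → RightDivides b c → RightDivides m c

/-- `g` is a left gcd of `a` and `b` (greatest lower bound for left divisibility). -/
def IsLeftGcd {M : Type*} [Monoid M] (a b g : M) : Prop :=
  LeftDvd g a ∧ LeftDvd g b ∧ ∀ x, LeftDvd x a → LeftDvd x b → LeftDvd x g

/-- `g` is a right gcd of `a` and `b` (greatest lower bound for right divisibility). -/
def IsRightGcd {M : Type*} [Monoid M] (a b g : M) : Prop :=
  RightDivides g a ∧ RightDivides g b ∧ ∀ x, RightDivides x a → RightDivides x b → RightDivides x g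


section Aux
variable {M : Type*} [CancelMonoid M] (hunit : ∀ a b : M, a * b = 1 → a = 1)

lemma rdvd_antisymm (hunit : ∀ a b : M, a * b = 1 → a = 1) {a b : M}
    (h1 : RightDivides a b) (h2 : RightDivides b a) : a = b := by
  obtain ⟨s, hs⟩ := h1
  obtain ⟨t, ht⟩ := h2
  have : (t * s) * a = 1 * a := by rw [mul_assoc, hs, ht, one_mul]
  have hts : t * s = 1 := mul_right_cancel this
  have ht1 : t = 1 := hunit _ _ hts
  have hs1 : s = 1 := by rwa [ht1, one_mul] at hts
  rw [← hs, hs1, one_mul]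

lemma rgcd_mul_right (hunit : ∀ a b : M, a * b = 1 → a = 1)
    (rgcd : M → M → M) (hrgcd : ∀ a b : M, IsRightGcd a b (rgcd a b))
    (p q r : M) : rgcd (p * r) (q * r) = rgcd p q * r := by
  obtain ⟨⟨d, hd⟩, ⟨e, he⟩, hmax⟩ := hrgcd (p * r) (q * r)
  obtain ⟨⟨d', hd'⟩, ⟨e', he'⟩, hmax'⟩ := hrgcd p q
  apply rdvd_antisymm hunit
  · -- rgcd (p*r) (q*r) right-divides (rgcd p q)*r
    -- first: r right-divides rgcd (p*r) (q*r)
    obtain ⟨c, hc⟩ := hmax r ⟨p, rfl⟩ ⟨q, rfl⟩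
    -- g = c * r, and d * c = p, e * c = q
    have hdc : d * c = p := mul_right_cancel (by rw [mul_assoc, hc, hd])
    have hec : e * c = q := mul_right_cancel (by rw [mul_assoc, hc, he])
    obtain ⟨u, hu⟩ := hmax' c ⟨d, hdc⟩ ⟨e, hec⟩
    exact ⟨u, by rw [← hc, ← hu, mul_assoc]⟩
  · -- (rgcd p q)*r right-divides rgcd (p*r) (q*r)
    exact hmax _ ⟨d', by rw [← mul_assoc, hd']⟩ ⟨e', by rw [← mul_assoc, he']⟩

lemma rgcd_comm (hunit : ∀ a b : M, a * b = 1 → a = 1)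
    (rgcd : M → M → M) (hrgcd : ∀ a b : M, IsRightGcd a b (rgcd a b))
    (p q : M) : rgcd p q = rgcd q p := by
  obtain ⟨h1, h2, hmax⟩ := hrgcd p q
  obtain ⟨h1', h2', hmax'⟩ := hrgcd q p
  exact rdvd_antisymm hunit (hmax' _ h2 h1) (hmax _ h2' h1')

end Aux

/-- A quadruple admits a central cross. -/
def CentralCross {M : Type*} [Monoid M] (a₁ a₂ a₃ a₄ : M) : Prop :=
  ∃ x₁ x₂ x₃ x₄ : M, a₁ = x₁ * x₂ ∧ a₂ = x₃ * x₂ ∧ a₃ = x₃ * x₄ ∧ a₄ = x₁ * x₄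

theorem stmt_6 {M : Type*} [CancelMonoid M]
    (hunit : ∀ a b : M, a * b = 1 → a = 1)
    (hgcdL : ∀ a b : M, ∃ g, IsLeftGcd a b g)
    (rgcd : M → M → M) (hrgcd : ∀ a b : M, IsRightGcd a b (rgcd a b))
    (a₁ a₂ a₃ a₄ : M) :
    CentralCross a₁ a₂ a₃ a₄ ↔
      ∃ x y : M, a₁ = x * rgcd a₁ a₂ ∧ a₂ = y * rgcd a₁ a₂ ∧
        a₃ = y * rgcd a₃ a₄ ∧ a₄ = x * rgcd a₃ a₄ := by
  constructor
  · rintro ⟨x₁, x₂, x₃, x₄, h1, h2, h3, h4⟩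
    have e12 : rgcd a₁ a₂ = rgcd x₁ x₃ * x₂ := by
      rw [h1, h2, rgcd_mul_right hunit rgcd hrgcd]
    have e34 : rgcd a₃ a₄ = rgcd x₁ x₃ * x₄ := by
      rw [h3, h4, rgcd_mul_right hunit rgcd hrgcd, rgcd_comm hunit rgcd hrgcd]
    obtain ⟨⟨d, hd⟩, ⟨e, he⟩, -⟩ := hrgcd x₁ x₃
    refine ⟨d, e, ?_, ?_, ?_, ?_⟩
    · rw [e12, ← mul_assoc, hd, h1]
    · rw [e12, ← mul_assoc, he, h2]
    · rw [e34, ← mul_assoc, he, h3]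
    · rw [e34, ← mul_assoc, hd, h4]
  · rintro ⟨x, y, h1, h2, h3, h4⟩
    exact ⟨x, rgcd a₁ a₂, y, rgcd a₃ a₄, h1, h2, h3, h4⟩
end

section
/- Let M be a gcd-monoid. Say a quadruple (a₁,a₂,a₃,a₄) of elements of M admits a central cross if there exist x₁,x₂,x₃,x₄ with a₁ = x₁x₂, a₂ = x₃x₂, a₃ = x₃x₄, a₄ = x₁x₄. Suppose (a₁,a₂,a₃,a₄) and (b₁,b₂,b₃,b₄) admit central crosses, and c₁,c₂,c₃,c₄ in M satisfy c₁a₄ = c₄b₁ and c₂a₃ = c₃b₂. Then (c₁a₁, c₂a₂, c₃b₃, c₄b₄) admits a central cross. -/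
universe u

theorem stmt_7 {M : Type*} [CancelMonoid M]
    (hunit : ∀ a b : M, a * b = 1 → a = 1)
    (hgcdL : ∀ a b : M, ∃ g, IsLeftGcd a b g)
    (hgcdR : ∀ a b : M, ∃ g, IsRightGcd a b g)
    (hlcmL : ∀ a b : M, (∃ c, RightDivides a c ∧ RightDivides b c) → ∃ m, IsLeftLcm a b m)
    (a₁ a₂ a₃ a₄ b₁ b₂ b₃ b₄ c₁ c₂ c₃ c₄ : M)
    (ha : CentralCross a₁ a₂ a₃ a₄) (hb : CentralCross b₁ b₂ b₃ b₄)
    (h1 : c₁ * a₄ = c₄ * b₁) (h2 : c₂ * a₃ = c₃ * b₂) :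
    CentralCross (c₁ * a₁) (c₂ * a₂) (c₃ * b₃) (c₄ * b₄) := by
  obtain ⟨x₁, x₂, x₃, x₄, hx1, hx2, hx3, hx4⟩ := ha
  obtain ⟨y₁, y₂, y₃, y₄, hy1, hy2, hy3, hy4⟩ := hb
  subst hx1 hx2 hx3 hx4 hy1 hy2 hy3 hy4
  -- c₁x₁x₄ = c₄y₁y₂ and c₂x₃x₄ = c₃y₃y₂ are common left multiples of x₄ and y₂
  have hcm : ∃ c, RightDivides x₄ c ∧ RightDivides y₂ c :=
    ⟨c₁ * (x₁ * x₄), ⟨c₁ * x₁, by rw [mul_assoc]⟩,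
      ⟨c₄ * y₁, by rw [mul_assoc]; exact h1.symm⟩⟩
  obtain ⟨L, ⟨d, hd⟩, ⟨e, he⟩, hmin⟩ := hlcmL x₄ y₂ hcm
  obtain ⟨p, hp⟩ := hmin (c₁ * (x₁ * x₄))
    ⟨c₁ * x₁, by rw [mul_assoc]⟩
    ⟨c₄ * y₁, by rw [mul_assoc]; exact h1.symm⟩
  obtain ⟨q, hq⟩ := hmin (c₂ * (x₃ * x₄))
    ⟨c₂ * x₃, by rw [mul_assoc]⟩
    ⟨c₃ * y₃, by rw [mul_assoc]; exact h2.symm⟩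
  have hpd : c₁ * x₁ = p * d := by
    have h : (c₁ * x₁) * x₄ = (p * d) * x₄ := by
      rw [mul_assoc, mul_assoc, hd, hp]
    exact mul_right_cancel h
  have hpe : c₄ * y₁ = p * e := by
    have h : (c₄ * y₁) * y₂ = (p * e) * y₂ := by
      rw [mul_assoc, mul_assoc, he, hp, h1]
    exact mul_right_cancel h
  have hqd : c₂ * x₃ = q * d := by
    have h : (c₂ * x₃) * x₄ = (q * d) * x₄ := by
      rw [mul_assoc, mul_assoc, hd, hq]
    exact mul_right_cancel h
  have hqe : c₃ * y₃ = q * e := by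
    have h : (c₃ * y₃) * y₂ = (q * e) * y₂ := by
      rw [mul_assoc, mul_assoc, he, hq, h2]
    exact mul_right_cancel h
  refine ⟨p, d * x₂, q, e * y₄, ?_, ?_, ?_, ?_⟩
  · rw [← mul_assoc, mul_assoc c₁, ← mul_assoc, hpd, mul_assoc]
  · rw [← mul_assoc, mul_assoc c₂, ← mul_assoc, hqd, mul_assoc]
  · rw [← mul_assoc, mul_assoc c₃, ← mul_assoc, hqe, mul_assoc]
  · rw [← mul_assoc, mul_assoc c₄, ← mul_assoc, hpe, mul_assoc]
end
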